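/- Let A ∈ ℝ^{m×n} be a fixed matrix and let 𝐛 ⊆ ℝᵐ, 𝐜 ⊆ ℝⁿ be interval vectors. A real number v is a finite optimal value of some scenario of the interval linear program min c⊤x subject to Ax ≤ b (with b ∈ 𝐛, c ∈ 𝐜) if and only if v is a finite optimal value of some scenario of the dual interval linear program max b⊤y subject to A⊤y = c, y ≤ 0 (with b ∈ 𝐛, c ∈ 𝐜); that is, the interval program and its dual have the same set of finite optimal values. -/

import Mathlib

open Matrix Finset

section Aux
variable {E : Type*} [NormedAddCommGroup E] [NormedSpace ℝ E] [FiniteDimensional ℝ E]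

lemma isClosed_cone_of_li {K : Type} [Fintype K] (v : K → E) (h : LinearIndependent ℝ v) :
    IsClosed {x : E | ∃ lam : K → ℝ, 0 ≤ lam ∧ ∑ i, lam i • v i = x} := by
  classical
  let f : (K → ℝ) →ₗ[ℝ] E :=
    { toFun := fun lam => ∑ i, lam i • v i
      map_add' := by intro a b; simp [add_smul, Finset.sum_add_distrib]
      map_smul' := by intro t a; simp [smul_smul, Finset.smul_sum] }
  have hker : LinearMap.ker f = ⊥ := by
    rw [LinearMap.ker_eq_bot']
    intro g hg
    have := Fintype.linearIndependent_iff.mp h g hg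
    funext i; exact this i
  have hce := LinearMap.isClosedEmbedding_of_injective (𝕜 := ℝ) hker
  have hset : {x : E | ∃ lam : K → ℝ, 0 ≤ lam ∧ ∑ i, lam i • v i = x}
      = f '' {lam | 0 ≤ lam} := by
    ext x
    simp [f, Set.mem_image, eq_comm]
  rw [hset]
  exact hce.isClosedMap _ (isClosed_Ici (a := (0 : K → ℝ)))

lemma sum_subtype_ne {K : Type} [Fintype K] [DecidableEq K] (i0 : K) (g : K → E)
    (h0 : g i0 = 0) : ∑ j : {j // j ≠ i0}, g j.1 = ∑ j, g j := by
  rw [← Finset.sum_erase_add _ _ (Finset.mem_univ i0), h0, add_zero]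
  exact (Finset.sum_subtype (Finset.univ.erase i0) (fun x => by simp [Finset.mem_erase]) g).symm

lemma isClosed_cone_aux : ∀ (k : ℕ) (K : Type) (_ : Fintype K) (v : K → E),
    Fintype.card K ≤ k →
    IsClosed {x : E | ∃ lam : K → ℝ, 0 ≤ lam ∧ ∑ i, lam i • v i = x} := by
  intro k
  induction k with
  | zero =>
    intro K _ v hcard
    have : IsEmpty K := Fintype.card_eq_zero_iff.mp (Nat.le_zero.mp hcard)
    exact isClosed_cone_of_li v linearIndependent_empty_type
  | succ k ih =>
    intro K _ v hcard
    classical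
    by_cases hli : LinearIndependent ℝ v
    · exact isClosed_cone_of_li v hli
    · obtain ⟨c₀, hsum₀, j, hj⟩ := Fintype.not_linearIndependent_iff.mp hli
      obtain ⟨c, hsum, hpos⟩ : ∃ c : K → ℝ, ∑ i, c i • v i = 0 ∧ ∃ i, 0 < c i := by
        rcases hj.lt_or_gt with h | h
        · refine ⟨-c₀, ?_, j, by simpa using h⟩
          simp [neg_smul, Finset.sum_neg_distrib, hsum₀]
        · exact ⟨c₀, hsum₀, j, h⟩
      have hKpos : 1 ≤ Fintype.card K := Fintype.card_pos_iff.mpr ⟨j⟩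
      have key : {x : E | ∃ lam : K → ℝ, 0 ≤ lam ∧ ∑ i, lam i • v i = x}
          = ⋃ i0 : K, {x : E | ∃ lam' : {j // j ≠ i0} → ℝ, 0 ≤ lam' ∧
              ∑ i, lam' i • v i.1 = x} := by
        ext x
        simp only [Set.mem_setOf_eq, Set.mem_iUnion]
        constructor
        · rintro ⟨lam, hlam, hx⟩
          set T : Finset K := Finset.univ.filter (fun i => 0 < c i) with hT
          have hTne : T.Nonempty := ⟨hpos.choose, by simp [hT, hpos.choose_spec]⟩
          obtain ⟨i0, hi0T, hmin⟩ := Finset.exists_min_image T (fun i => lam i / c i) hTne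
          have hci0 : 0 < c i0 := by simpa [hT] using hi0T
          set t : ℝ := lam i0 / c i0 with ht
          have ht0 : 0 ≤ t := div_nonneg (hlam i0) hci0.le
          set mu : K → ℝ := fun i => lam i - t * c i with hmu
          have hmu0 : 0 ≤ mu := by
            intro i
            by_cases hc : 0 < c i
            · have hiT : i ∈ T := by simp [hT, hc]
              have : t * c i ≤ lam i := (le_div_iff₀ hc).mp (hmin i hiT)
              simpa [hmu, sub_nonneg] using this
            · push_neg at hc
              have : t * c i ≤ 0 := mul_nonpos_of_nonneg_of_nonpos ht0 hc
              have := sub_nonneg.mpr (this.trans (hlam i))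
              simpa [hmu, sub_nonneg] using (this)
          have hmui0 : mu i0 = 0 := by
            simp [hmu, ht, div_mul_cancel₀ _ hci0.ne']
          have hmusum : ∑ i, mu i • v i = x := by
            simp only [hmu, sub_smul, Finset.sum_sub_distrib, mul_smul]
            rw [← Finset.smul_sum, hsum, smul_zero, sub_zero, hx]
          refine ⟨i0, fun i => mu i.1, fun i => hmu0 i.1, ?_⟩
          rw [sum_subtype_ne i0 (fun i => mu i • v i) (by simp [hmui0])]
          exact hmusum
        · rintro ⟨i0, lam', hlam', hx⟩
          refine ⟨fun j => if h : j ≠ i0 then lam' ⟨j, h⟩ else 0, ?_, ?_⟩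
          · intro i; by_cases h : i ≠ i0 <;> simp [h] ; exact hlam' _
          · rw [← sum_subtype_ne i0 (fun i => (if h : i ≠ i0 then lam' ⟨i, h⟩ else 0) • v i)
              (by simp)]
            rw [← hx]
            apply Finset.sum_congr rfl
            intro i _
            simp [i.2]
      rw [key]
      apply isClosed_iUnion_of_finite
      intro i0
      have hcard' : Fintype.card {j // j ≠ i0} ≤ k := by
        have : Fintype.card {j // j ≠ i0} = Fintype.card K - 1 := by
          simp [Fintype.card_subtype_compl]
        omega
      exact ih _ _ _ hcard'


lemma farkas_hclosed {K L : Type} [Fintype K] [Fintype L] (M : Matrix K L ℝ) (d : L → ℝ)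
    (hclosed : IsClosed {x : EuclideanSpace ℝ L | ∃ lam : K → ℝ, 0 ≤ lam ∧
      ∑ i, lam i • ((WithLp.equiv 2 (L → ℝ)).symm (M i)) = x})
    (h : ∀ z : L → ℝ, M.mulVec z ≤ 0 → d ⬝ᵥ z ≤ 0) :
    ∃ lam : K → ℝ, 0 ≤ lam ∧ Mᵀ.mulVec lam = d := by
  classical
  set v : K → EuclideanSpace ℝ L := fun i => (WithLp.equiv 2 (L → ℝ)).symm (M i) with hv
  set S : Set (EuclideanSpace ℝ L) := {x | ∃ lam : K → ℝ, 0 ≤ lam ∧ ∑ i, lam i • v i = x}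
    with hS
  -- coordinates of elements of S
  have hcoord : ∀ (lam : K → ℝ) (j : L), (∑ i, lam i • v i) j = ∑ i, lam i * M i j := by
    intro lam j
    have hm := map_sum (PiLp.projₗ (𝕜 := ℝ) 2 (fun _ : L => ℝ) j) (fun i => lam i • v i)
      Finset.univ
    simp only [PiLp.projₗ_apply] at hm
    show (WithLp.equiv 2 (L → ℝ)) (∑ i, lam i • v i) j = ∑ i, lam i * M i j
    change (∑ i, lam i • v i).ofLp j = _
    rw [hm]
    simp [hv]
  have hd : ((WithLp.equiv 2 (L → ℝ)).symm d) ∈ S := by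
    by_contra hnd
    set C : ConvexCone ℝ (EuclideanSpace ℝ L) :=
      { carrier := S
        smul_mem' := by
          rintro t ht x ⟨lam, hlam, hx⟩
          refine ⟨t • lam, fun i => mul_nonneg ht.le (hlam i), ?_⟩
          rw [← hx, Finset.smul_sum]
          exact Finset.sum_congr rfl fun i _ => by simp [smul_smul]
        add_mem' := by
          rintro x ⟨lam, hlam, hx⟩ y ⟨mu, hmu, hy⟩
          refine ⟨lam + mu, fun i => add_nonneg (hlam i) (hmu i), ?_⟩
          simp only [Pi.add_apply, add_smul, Finset.sum_add_distrib, hx, hy] } with hC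
    have hne : (C : Set (EuclideanSpace ℝ L)).Nonempty :=
      ⟨0, 0, le_refl _, by simp⟩
    obtain ⟨y, hy1, hy2⟩ :=
      (show ProperCone ℝ (EuclideanSpace ℝ L) from
        { carrier := S
          add_mem' := fun ha hb => C.add_mem' ha hb
          zero_mem' := ⟨0, le_refl _, by simp⟩
          smul_mem' := by
            rintro t x ⟨lam, hlam, hx⟩
            refine ⟨(t : ℝ) • lam, fun i => mul_nonneg t.2 (hlam i), ?_⟩
            rw [← hx, Finset.smul_sum]
            exact Finset.sum_congr rfl fun i _ => by rw [Pi.smul_apply, smul_eq_mul, mul_smul]; rfl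
          isClosed' := hclosed }).hyperplane_separation' hnd
    -- each generator is in C
    have hgen : ∀ i : K, 0 ≤ ∑ j, M i j * y j := by
      intro i
      have hvi : v i ∈ C := by
        refine ⟨fun i' => if i' = i then 1 else 0, by intro i'; positivity, ?_⟩
        simp [ite_smul]
      have := hy1 _ hvi
      rw [PiLp.inner_apply] at this
      simpa [hv, WithLp.equiv_symm_apply, PiLp.toLp_apply, mul_comm] using this
    have hMz : M.mulVec (fun j => -(y j)) ≤ 0 := by
      intro i
      simp only [Matrix.mulVec, dotProduct, Pi.zero_apply, mul_neg,
        Finset.sum_neg_distrib]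
      exact neg_nonpos_of_nonneg (hgen i)
    have h1 : 0 ≤ ∑ j, d j * y j := by
      have h2 := h _ hMz
      simp only [dotProduct, mul_neg, Finset.sum_neg_distrib, neg_nonpos] at h2
      exact h2
    rw [PiLp.inner_apply] at hy2
    simp only [WithLp.equiv_symm_apply, PiLp.toLp_apply, RCLike.inner_apply, conj_trivial] at hy2
    have h3 : ∑ j, y j * d j = ∑ j, d j * y j :=
      Finset.sum_congr rfl fun j _ => mul_comm _ _
    rw [h3] at hy2
    linarith
  obtain ⟨lam, hlam, hsum⟩ := hd
  refine ⟨lam, hlam, funext fun j => ?_⟩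
  have := congrArg (fun x : EuclideanSpace ℝ L => x j) hsum
  simp only at this
  rw [hcoord] at this
  simp only [WithLp.equiv_symm_apply, PiLp.toLp_apply] at this
  rw [Matrix.mulVec]
  simpa [dotProduct, Matrix.transpose_apply, mul_comm] using this


lemma farkas_aux {K L : Type} [Fintype K] [Fintype L] (M : Matrix K L ℝ) (d : L → ℝ)
    (h : ∀ z : L → ℝ, M.mulVec z ≤ 0 → d ⬝ᵥ z ≤ 0) :
    ∃ lam : K → ℝ, 0 ≤ lam ∧ Mᵀ.mulVec lam = d :=
  farkas_hclosed M d (isClosed_cone_aux (Fintype.card K) K inferInstance _ le_rfl) h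

lemma affineFarkas {K L : Type} [Fintype K] [Fintype L] (M : Matrix K L ℝ) (q : K → ℝ)
    (c : L → ℝ) (v : ℝ) (hfeas : ∃ x, M.mulVec x ≤ q)
    (hopt : ∀ x, M.mulVec x ≤ q → v ≤ c ⬝ᵥ x) :
    ∃ y : K → ℝ, y ≤ 0 ∧ Mᵀ.mulVec y = c ∧ v ≤ q ⬝ᵥ y := by
  classical
  set N : Matrix (K ⊕ Unit) (L ⊕ Unit) ℝ := fun i j =>
    match i, j with
    | Sum.inl i, Sum.inl j => M i j
    | Sum.inl i, Sum.inr _ => -q i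
    | Sum.inr _, Sum.inl _ => 0
    | Sum.inr _, Sum.inr _ => -1 with hN
  set d : L ⊕ Unit → ℝ := Sum.elim (fun j => -c j) (fun _ => v) with hd
  have key : ∀ z : (L ⊕ Unit) → ℝ, N.mulVec z ≤ 0 → d ⬝ᵥ z ≤ 0 := by
    intro z hz
    set x : L → ℝ := fun j => z (Sum.inl j) with hx
    set t : ℝ := z (Sum.inr ()) with htdef
    have hrow : ∀ i : K, (M.mulVec x) i ≤ q i * t := by
      intro i
      have := hz (Sum.inl i)
      simp only [Matrix.mulVec, dotProduct, Fintype.sum_sum_type, hN,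
        Fintype.sum_unique, Pi.zero_apply, neg_mul] at this ⊢
      linarith
    have ht : 0 ≤ t := by
      have := hz (Sum.inr ())
      simp only [Matrix.mulVec, dotProduct, Fintype.sum_sum_type, hN,
        Fintype.sum_unique, Pi.zero_apply, neg_mul, one_mul, zero_mul,
        Finset.sum_const_zero, zero_add] at this
      linarith
    have main : v * t ≤ c ⬝ᵥ x := by
      rcases lt_or_eq_of_le ht with ht' | ht'
      · have hfx : M.mulVec (t⁻¹ • x) ≤ q := by
          intro i
          have := hrow i
          have h2 : (M.mulVec (t⁻¹ • x)) i = t⁻¹ * (M.mulVec x) i := by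
            simp [Matrix.mulVec, dotProduct, Finset.mul_sum, mul_left_comm]
          rw [h2]
          rw [inv_mul_le_iff₀ ht']
          linarith [hrow i]
        have := hopt _ hfx
        have h3 : c ⬝ᵥ (t⁻¹ • x) = t⁻¹ * (c ⬝ᵥ x) := by
          simp [dotProduct, Finset.mul_sum, mul_left_comm]
        rw [h3, le_inv_mul_iff₀ ht'] at this
        linarith [this]
      · obtain ⟨x0, hx0⟩ := hfeas
        have hMx : ∀ i, (M.mulVec x) i ≤ 0 := by
          intro i; have := hrow i; rw [← ht'] at this; simpa using this
        have hcx : 0 ≤ c ⬝ᵥ x := by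
          by_contra hneg
          push_neg at hneg
          set s : ℝ := (c ⬝ᵥ x0 - v + 1) / (-(c ⬝ᵥ x)) with hs
          have hspos : 0 ≤ s := by
            apply div_nonneg _ (by linarith)
            have := hopt x0 hx0
            linarith
          have hfeas2 : M.mulVec (x0 + s • x) ≤ q := by
            intro i
            have h4 : (M.mulVec (x0 + s • x)) i = (M.mulVec x0) i + s * (M.mulVec x) i := by
              simp [Matrix.mulVec, dotProduct, Finset.mul_sum, mul_add, mul_left_comm,
                Finset.sum_add_distrib]
            rw [h4]
            have := mul_nonpos_of_nonneg_of_nonpos hspos (hMx i)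
            linarith [hx0 i]
          have h5 := hopt _ hfeas2
          have h6 : c ⬝ᵥ (x0 + s • x) = c ⬝ᵥ x0 + s * (c ⬝ᵥ x) := by
            simp [dotProduct, Finset.mul_sum, mul_add, mul_left_comm,
              Finset.sum_add_distrib]
          rw [h6, hs] at h5
          rw [div_neg, neg_mul, div_mul_cancel₀ _ (ne_of_lt hneg)] at h5
          linarith
        rw [← ht']
        simpa using hcx
    simp only [dotProduct, Fintype.sum_sum_type, hd, Fintype.sum_unique,
      Sum.elim_inl, Sum.elim_inr, neg_mul]
    have : ∑ j, -(c j * x j) = -(c ⬝ᵥ x) := by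
      simp [dotProduct, Finset.sum_neg_distrib]
    rw [this]
    linarith [main]
  obtain ⟨lam, hlam, hsum⟩ := farkas_aux N d key
  set w : K → ℝ := fun i => lam (Sum.inl i) with hw
  set s : ℝ := lam (Sum.inr ()) with hsdef
  have hcol : ∀ j : L, ∑ i, M i j * w i = -c j := by
    intro j
    have := congrFun hsum (Sum.inl j)
    simp only [Matrix.mulVec, dotProduct, Matrix.transpose_apply, Matrix.transpose, Matrix.of_apply,
      Fintype.sum_sum_type, hN, hd, Fintype.sum_unique, Sum.elim_inl, zero_mul,
      add_zero] at this
    exact this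
  have hlast : -(∑ i, q i * w i) - s = v := by
    have := congrFun hsum (Sum.inr ())
    simp only [Matrix.mulVec, dotProduct, Matrix.transpose_apply, Matrix.transpose, Matrix.of_apply,
      Fintype.sum_sum_type, hN, hd, Fintype.sum_unique, Sum.elim_inr, neg_mul,
      one_mul, Finset.sum_neg_distrib] at this
    linarith [this]
  refine ⟨fun i => -(w i), fun i => neg_nonpos_of_nonneg (hlam (Sum.inl i)), ?_, ?_⟩
  · funext j
    have := hcol j
    simp only [Matrix.mulVec, dotProduct, Matrix.transpose_apply, mul_neg,
      Finset.sum_neg_distrib]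
    linarith [this]
  · have hs0 : 0 ≤ s := hlam (Sum.inr ())
    simp only [dotProduct, mul_neg, Finset.sum_neg_distrib]
    linarith [hlast]

end Aux


/-- An interval LP `min cᵀx, Ax ≤ b` with a fixed coefficient matrix and its dual interval
LP `max bᵀy, Aᵀy = c, y ≤ 0` have the same set of finite optimal values. -/
lemma weakDuality {m n : ℕ} (A : Matrix (Fin m) (Fin n) ℝ) (b : Fin m → ℝ) (c : Fin n → ℝ)
    (x : Fin n → ℝ) (y : Fin m → ℝ) (hx : A.mulVec x ≤ b) (hy : Aᵀ.mulVec y = c)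
    (hy0 : y ≤ 0) : b ⬝ᵥ y ≤ c ⬝ᵥ x := by
  have h1 : c ⬝ᵥ x = y ⬝ᵥ (A.mulVec x) := by
    rw [← hy, Matrix.mulVec_transpose, ← Matrix.dotProduct_mulVec]
  rw [h1, dotProduct_comm b y]
  apply Finset.sum_le_sum
  intro i _
  exact mul_le_mul_of_nonpos_left (hx i) (hy0 i)

theorem finite_optimal_values_duality_fixed_matrix (m n : ℕ)
    (A : Matrix (Fin m) (Fin n) ℝ) (bl bu : Fin m → ℝ) (cl cu : Fin n → ℝ)
    (hb : bl ≤ bu) (hc : cl ≤ cu) (v : ℝ) :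
    (∃ (b : Fin m → ℝ) (c : Fin n → ℝ), bl ≤ b ∧ b ≤ bu ∧ cl ≤ c ∧ c ≤ cu ∧
      ∃ x : Fin n → ℝ, A.mulVec x ≤ b ∧ c ⬝ᵥ x = v ∧
        ∀ x' : Fin n → ℝ, A.mulVec x' ≤ b → c ⬝ᵥ x ≤ c ⬝ᵥ x') ↔
    (∃ (b : Fin m → ℝ) (c : Fin n → ℝ), bl ≤ b ∧ b ≤ bu ∧ cl ≤ c ∧ c ≤ cu ∧
      ∃ y : Fin m → ℝ, (Aᵀ.mulVec y = c ∧ y ≤ 0) ∧ b ⬝ᵥ y = v ∧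
        ∀ y' : Fin m → ℝ, (Aᵀ.mulVec y' = c ∧ y' ≤ 0) → b ⬝ᵥ y' ≤ b ⬝ᵥ y) := by
  classical
  constructor
  · rintro ⟨b, c, hb1, hb2, hc1, hc2, x, hx, hxv, hxopt⟩
    obtain ⟨y, hy0, hyA, hvy⟩ := affineFarkas A b c v ⟨x, hx⟩
      (fun x' hx' => hxv ▸ hxopt x' hx')
    have hweak := weakDuality A b c x y hx hyA hy0
    refine ⟨b, c, hb1, hb2, hc1, hc2, y, ⟨hyA, hy0⟩,
      le_antisymm (by rw [← hxv]; exact hweak) hvy, ?_⟩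
    intro y' ⟨hy'A, hy'0⟩
    have := weakDuality A b c x y' hx hy'A hy'0
    calc b ⬝ᵥ y' ≤ c ⬝ᵥ x := this
      _ = v := hxv
      _ ≤ b ⬝ᵥ y := hvy
  · rintro ⟨b, c, hb1, hb2, hc1, hc2, y, ⟨hyA, hy0⟩, hyv, hyopt⟩
    set N : Matrix ((Fin n) ⊕ ((Fin n) ⊕ (Fin m))) (Fin m) ℝ := fun r i =>
      match r with
      | Sum.inl p => A i p
      | Sum.inr (Sum.inl p) => -(A i p)
      | Sum.inr (Sum.inr i') => if i' = i then 1 else 0 with hN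
    set qq : (Fin n) ⊕ ((Fin n) ⊕ (Fin m)) → ℝ :=
      Sum.elim c (Sum.elim (fun p => -c p) (fun _ => 0)) with hqq
    have hNmul : ∀ (y' : Fin m → ℝ), N.mulVec y' ≤ qq ↔ (Aᵀ.mulVec y' = c ∧ y' ≤ 0) := by
      intro y'
      constructor
      · intro h
        constructor
        · funext p
          have h1 := h (Sum.inl p)
          have h2 := h (Sum.inr (Sum.inl p))
          simp only [Matrix.mulVec, dotProduct, hN, hqq, Sum.elim_inl,
            Sum.elim_inr, neg_mul, Finset.sum_neg_distrib] at h1 h2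
          simp only [Matrix.mulVec, dotProduct, Matrix.transpose_apply]
          linarith
        · intro i
          have h3 := h (Sum.inr (Sum.inr i))
          simp only [Matrix.mulVec, dotProduct, hN, hqq, Sum.elim_inr,
            Sum.elim_inl, ite_mul, one_mul, zero_mul, Finset.sum_ite_eq, Finset.sum_ite_eq',
            Finset.mem_univ, if_true] at h3
          simpa using h3
      · rintro ⟨hA, h0⟩
        intro r
        match r with
        | Sum.inl p =>
          have := congrFun hA p
          simp only [Matrix.mulVec, dotProduct, Matrix.transpose_apply] at this
          simp only [Matrix.mulVec, dotProduct, hN, hqq, Sum.elim_inl]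
          exact le_of_eq this
        | Sum.inr (Sum.inl p) =>
          have := congrFun hA p
          simp only [Matrix.mulVec, dotProduct, Matrix.transpose_apply] at this
          simp only [Matrix.mulVec, dotProduct, hN, hqq, Sum.elim_inr, Sum.elim_inl,
            neg_mul, Finset.sum_neg_distrib]
          linarith
        | Sum.inr (Sum.inr i) =>
          simp only [Matrix.mulVec, dotProduct, hN, hqq, Sum.elim_inr, ite_mul,
            one_mul, zero_mul, Finset.sum_ite_eq, Finset.sum_ite_eq', Finset.mem_univ, if_true]
          exact h0 i
    obtain ⟨z, hz0, hzN, hzq⟩ := affineFarkas N qq (fun i => -(b i)) (-v)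
      ⟨y, (hNmul y).mpr ⟨hyA, hy0⟩⟩
      (by
        intro y' hy'
        obtain ⟨hy'A, hy'0⟩ := (hNmul y').mp hy'
        have := hyopt y' ⟨hy'A, hy'0⟩
        rw [hyv] at this
        simp only [dotProduct, neg_mul, Finset.sum_neg_distrib]
        simp only [dotProduct] at this
        linarith)
    set x : Fin n → ℝ := fun p => z (Sum.inr (Sum.inl p)) - z (Sum.inl p) with hxdef
    have hxfeas : A.mulVec x ≤ b := by
      intro i
      have hi := congrFun hzN i
      simp only [Matrix.mulVec, dotProduct, Matrix.transpose_apply, Matrix.transpose, Matrix.of_apply, hN,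
        Fintype.sum_sum_type, neg_mul, Finset.sum_neg_distrib, ite_mul, one_mul, zero_mul,
        Finset.sum_ite_eq, Finset.sum_ite_eq', Finset.mem_univ, if_true] at hi
      have hz0i : z (Sum.inr (Sum.inr i)) ≤ 0 := hz0 (Sum.inr (Sum.inr i))
      simp only [Matrix.mulVec, dotProduct, hxdef, mul_sub, Finset.sum_sub_distrib]
      linarith [hi]
    have hxval : c ⬝ᵥ x ≤ v := by
      simp only [dotProduct, hqq, Fintype.sum_sum_type, Sum.elim_inl, Sum.elim_inr,
        neg_mul, Finset.sum_neg_distrib, zero_mul, Finset.sum_const_zero, add_zero] at hzq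
      simp only [dotProduct, hxdef, mul_sub, Finset.sum_sub_distrib]
      linarith [hzq]
    have hweak := weakDuality A b c x y hxfeas hyA hy0
    refine ⟨b, c, hb1, hb2, hc1, hc2, x, hxfeas, le_antisymm hxval (by rw [← hyv]; exact hweak),
      ?_⟩
    intro x' hx'
    have := weakDuality A b c x' y hx' hyA hy0
    calc c ⬝ᵥ x ≤ v := hxval
      _ = b ⬝ᵥ y := hyv.symm
      _ ≤ c ⬝ᵥ x' := this
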